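/- Assume I(Ω) contains a non-zero-divisor of R, and let a ∈ I(Ω), n ≥ 0, and integers p ≥ r ≥ 1 be given. If a^n · η = Σ_{J ∈ 𝒥(r,k)} ω_J ∧ γ'_J and a^n · η = Σ_{J ∈ 𝒥(r,k)} ω_J ∧ γ''_J are two representations of the same element with γ'_J, γ''_J ∈ Λ^{p−r} M, then for every J ∈ 𝒥(r,k) and all α₁,…,α_{p−r} ∈ K = {g ∈ M* : g(ω_i) = 0 for i = 1,…,k}, one has γ'_J(α₁,…,α_{p−r}) = γ''_J(α₁,…,α_{p−r}), where elements of Λ^{p−r} M are evaluated as alternating (p−r)-linear forms on the dual module M*. -/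

import Mathlib

/-!
Statement 8 (Theorem 2 (Uniqueness)): assume `I(Ω)` contains a non-zero-divisor of `R`, and
let `a ∈ I(Ω)`, `n ≥ 0`, `p ≥ r ≥ 1`.  If `aⁿ η = Σ_{J ∈ 𝒥(r,k)} ω_J ∧ γ'_J` and
`aⁿ η = Σ_{J ∈ 𝒥(r,k)} ω_J ∧ γ''_J` with `γ'_J, γ''_J ∈ Λ^{p−r} M`, then for every
`J ∈ 𝒥(r,k)` and all `α₁, …, α_{p−r} ∈ K = ⋂ᵢ ker ωᵢ ⊆ M*`,
`γ'_J(α₁,…,α_{p−r}) = γ''_J(α₁,…,α_{p−r})`, where elements of `Λ^q M` are evaluated as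
alternating `q`-linear forms on `M*` (on decomposables,
`(v₁∧⋯∧v_q)(α₁,…,α_q) = det (αᵢ(vⱼ))`).
-/

open ExteriorAlgebra

/-- The ideal `I(x)` generated by the coefficients of an element `x` of the exterior algebra
of a (finite free) module `M` in an induced basis; equivalently (and basis-independently),
the ideal generated by the values `φ x` over all linear functionals `φ`. -/
def coeffIdeal (R : Type*) [CommRing R] {M : Type*} [AddCommGroup M] [Module R M]
    (x : ExteriorAlgebra R M) : Ideal R :=
  Ideal.span (Set.range fun φ : Module.Dual R (ExteriorAlgebra R M) => φ x)

/-- `ω_J = ω_{j₁} ∧ ⋯ ∧ ω_{j_r}` for a strictly increasing multi-index `J`, encoded as a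
finite set `s` of indices listed in increasing order. -/
noncomputable def wedgeProd (R : Type*) [CommRing R] {M : Type*} [AddCommGroup M] [Module R M]
    {k : ℕ} (ω : Fin k → M) (s : Finset (Fin k)) : ExteriorAlgebra R M :=
  ((s.sort (· ≤ ·)).map fun j => ExteriorAlgebra.ι R (ω j)).prod

/-- Evaluation of a degree-`q` element of the exterior algebra of `M` as an alternating
`q`-linear form on the dual module `M*`: on a decomposable element `v₁ ∧ ⋯ ∧ v_q` and
functionals `α₁, …, α_q` it gives `det (αᵢ (vⱼ))`. -/
noncomputable def evalForm {R : Type*} [CommRing R] {M : Type*} [AddCommGroup M] [Module R M]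
    (q : ℕ) (α : Fin q → Module.Dual R M) : ExteriorAlgebra R M →ₗ[R] R :=
  ExteriorAlgebra.liftAlternating
    (Function.update (0 : ∀ i : ℕ, M [⋀^Fin i]→ₗ[R] R) q
      (Matrix.detRowAlternating.compLinearMap (LinearMap.pi fun i => α i)))

section Aux

variable {R : Type*} [CommRing R] {M : Type*} [AddCommGroup M] [Module R M]

lemma aux_prod_perm {l₁ l₂ : List M} (h : l₁.Perm l₂) :
    (l₁.map (ι R)).prod = (l₂.map (ι R)).prod ∨
      (l₁.map (ι R)).prod = -(l₂.map (ι R)).prod := by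
  induction h with
  | nil => exact Or.inl rfl
  | cons x h ih =>
    rcases ih with h' | h'
    · exact Or.inl (by simp [h'])
    · exact Or.inr (by simp [h', mul_neg])
  | swap x y l =>
    refine Or.inr ?_
    simp only [List.map_cons, List.prod_cons, ← mul_assoc]
    rw [show ι R y * ι R x = -(ι R x * ι R y) from
      eq_neg_of_add_eq_zero_right (ι_add_mul_swap x y), neg_mul]
  | trans h1 h2 ih1 ih2 =>
    rcases ih1 with h' | h' <;> rcases ih2 with h'' | h''
    · exact Or.inl (h'.trans h'')
    · exact Or.inr (h'.trans h'')
    · exact Or.inr (by rw [h', h''])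
    · exact Or.inl (by rw [h', h'', neg_neg])

lemma aux_prod_zero_of_mem {l₁ l₂ : List M} {a : M} (h₁ : a ∈ l₁) (h₂ : a ∈ l₂) :
    ((l₁ ++ l₂).map (ι R)).prod = 0 := by
  classical
  have p1 := List.perm_cons_erase h₁
  have p2 := List.perm_cons_erase h₂
  have hperm : (l₁ ++ l₂).Perm (a :: a :: (l₁.erase a ++ l₂.erase a)) := by
    refine (p1.append p2).trans ?_
    show (a :: (l₁.erase a ++ a :: l₂.erase a)).Perm _
    exact (List.perm_middle).cons a
  have h0 : ((a :: a :: (l₁.erase a ++ l₂.erase a)).map (ι R)).prod = 0 := by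
    simp only [List.map_cons, List.prod_cons, ← mul_assoc, ι_sq_zero, zero_mul]
  rcases aux_prod_perm (R := R) hperm with h | h
  · rw [h, h0]
  · rw [h, h0, neg_zero]

lemma aux_contract_prod (d : Module.Dual R M) (l : List M) (hl : ∀ v ∈ l, d v = 0)
    (x : ExteriorAlgebra R M) :
    CliffordAlgebra.contractLeft d ((l.map (ι R)).prod * x) =
      ((-1 : R) ^ l.length) • ((l.map (ι R)).prod * CliffordAlgebra.contractLeft d x) := by
  induction l with
  | nil => simp
  | cons v t ih =>
    simp only [List.map_cons, List.prod_cons, mul_assoc]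
    rw [CliffordAlgebra.contractLeft_ι_mul, hl v List.mem_cons_self,
      ih (fun w hw => hl w (List.mem_cons_of_mem v hw)), zero_smul, zero_sub,
      List.length_cons, pow_succ, mul_comm ((-1 : R) ^ t.length) (-1 : R), mul_smul,
      mul_smul_comm, neg_one_smul]

lemma aux_contract_ιMulti (d : Module.Dual R M) (n : ℕ) (v : Fin (n + 1) → M) :
    CliffordAlgebra.contractLeft d (ιMulti R (n + 1) v) =
      ∑ j : Fin (n + 1), ((-1 : R) ^ (j : ℕ) * d (v j)) • ιMulti R n (v ∘ j.succAbove) := by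
  induction n with
  | zero =>
    rw [ιMulti_succ_apply, CliffordAlgebra.contractLeft_ι_mul]
    have h1 : CliffordAlgebra.contractLeft d (ιMulti R 0 (Matrix.vecTail v)) = 0 := by
      rw [ιMulti_zero_apply, show (1 : ExteriorAlgebra R M) = algebraMap R _ 1 from (map_one _).symm,
        CliffordAlgebra.contractLeft_algebraMap]
    rw [h1, mul_zero, sub_zero]
    simp
  | succ n ih =>
    rw [ιMulti_succ_apply, CliffordAlgebra.contractLeft_ι_mul, ih (Matrix.vecTail v)]
    have e0 : v ∘ (0 : Fin (n + 2)).succAbove = Matrix.vecTail v := by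
      funext j; simp [Matrix.vecTail, Fin.zero_succAbove]
    have esucc : ∀ i : Fin (n + 1),
        ιMulti R (n + 1) (v ∘ (i.succ).succAbove) =
          ι R (v 0) * ιMulti R n (Matrix.vecTail v ∘ i.succAbove) := by
      intro i
      rw [ιMulti_succ_apply]
      congr 1
      · congr 1
        funext j
        simp [Matrix.vecTail, Function.comp, Fin.succ_succAbove_succ]
    conv_rhs => rw [Fin.sum_univ_succ]
    rw [sub_eq_add_neg]
    congr 1
    · rw [e0]
      norm_num
    · rw [Finset.mul_sum, ← Finset.sum_neg_distrib]
      refine Finset.sum_congr rfl fun i _ => ?_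
      rw [esucc i, mul_smul_comm, ← neg_smul]
      congr 1
      have hv : Matrix.vecTail v i = v i.succ := rfl
      rw [hv, Fin.val_succ, pow_succ]
      ring

/-- Iterated left contraction. -/
noncomputable def iContr :
    (q : ℕ) → (Fin q → Module.Dual R M) → ExteriorAlgebra R M →ₗ[R] ExteriorAlgebra R M
  | 0, _ => LinearMap.id
  | (q + 1), α => iContr q (fun i => α i.succ) ∘ₗ CliffordAlgebra.contractLeft (α 0)

lemma aux_iContr_ιMulti (q : ℕ) (α : Fin q → Module.Dual R M) (v : Fin q → M) :
    iContr q α (ιMulti R q v) =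
      algebraMap R _ (Matrix.det (Matrix.of fun i j => α i (v j))) := by
  induction q with
  | zero =>
    rw [ιMulti_zero_apply]
    simp [iContr, Matrix.det_fin_zero]
  | succ q ih =>
    show iContr q (fun i => α i.succ) (CliffordAlgebra.contractLeft (α 0) (ιMulti R (q+1) v)) = _
    rw [aux_contract_ιMulti, map_sum]
    have hthis : ∀ j : Fin (q + 1),
        iContr q (fun i => α i.succ) (((-1 : R) ^ (j : ℕ) * α 0 (v j)) • ιMulti R q (v ∘ j.succAbove))
          = algebraMap R _ ((-1 : R) ^ (j : ℕ) * (Matrix.of fun i j => α i (v j)) 0 j *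
              (((Matrix.of fun i j => α i (v j)).submatrix Fin.succ j.succAbove).det)) := by
      intro j
      rw [map_smul, ih (fun i => α i.succ) (v ∘ j.succAbove), Algebra.smul_def, ← map_mul]
      congr 1

    rw [Finset.sum_congr rfl fun j _ => hthis j, ← map_sum]
    congr 1
    exact (Matrix.det_succ_row_zero _).symm

lemma aux_evalForm_ιMulti (q : ℕ) (α : Fin q → Module.Dual R M) (v : Fin q → M) :
    evalForm q α (ιMulti R q v) = Matrix.det (Matrix.of fun i j => α i (v j)) := by
  rw [evalForm, ExteriorAlgebra.liftAlternating_apply_ιMulti, Function.update_self]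
  rw [AlternatingMap.compLinearMap_apply]
  rw [show (Matrix.detRowAlternating fun j => (LinearMap.pi fun i => α i) (v j)) =
    Matrix.det (Matrix.of fun j i => α i (v j)) from rfl]
  rw [← Matrix.det_transpose]
  congr 1

lemma aux_iContr_eq (q : ℕ) (α : Fin q → Module.Dual R M) {x : ExteriorAlgebra R M}
    (hx : x ∈ ⋀[R]^q M) :
    iContr q α x = algebraMap R _ (evalForm q α x) := by
  rw [← ιMulti_span_fixedDegree] at hx
  induction hx using Submodule.span_induction with
  | mem x h =>
    obtain ⟨v, rfl⟩ := h
    rw [aux_iContr_ιMulti, aux_evalForm_ιMulti]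
  | zero => simp
  | add x y hx hy ihx ihy => rw [map_add, map_add, ihx, ihy, map_add]
  | smul a x hx ihx =>
    rw [map_smul, ihx, map_smul, smul_eq_mul, map_mul, Algebra.smul_def]

lemma aux_iContr_prod (q : ℕ) (α : Fin q → Module.Dual R M) (l : List M)
    (hl : ∀ i, ∀ v ∈ l, α i v = 0) (x : ExteriorAlgebra R M) :
    iContr q α ((l.map (ι R)).prod * x) =
      ((-1 : R) ^ (l.length * q)) • ((l.map (ι R)).prod * iContr q α x) := by
  induction q generalizing x with
  | zero => simp [iContr]
  | succ q ih =>
    show iContr q (fun i => α i.succ) (CliffordAlgebra.contractLeft (α 0) _) = _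
    rw [aux_contract_prod (α 0) l (hl 0) x, map_smul,
      ih (fun i => α i.succ) (fun i v hv => hl i.succ v hv) (CliffordAlgebra.contractLeft (α 0) x),
      smul_smul, ← pow_add]
    congr 2
    ring

end Aux

theorem stmt_8 {R : Type*} [CommRing R] {M : Type*} [AddCommGroup M] [Module R M]
    {m k : ℕ} (b : Module.Basis (Fin m) R M) (hk1 : 1 ≤ k) (hkm : k ≤ m)
    (ω : Fin k → M)
    (hnzd : ∃ c ∈ coeffIdeal R (wedgeProd R ω Finset.univ), c ∈ nonZeroDivisors R)
    (a : R) (ha : a ∈ coeffIdeal R (wedgeProd R ω Finset.univ)) (n : ℕ)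
    (p r : ℕ) (hr1 : 1 ≤ r) (hrp : r ≤ p)
    (η : ExteriorAlgebra R M) (hη : η ∈ ⋀[R]^p M)
    (γ' γ'' : Finset (Fin k) → ExteriorAlgebra R M)
    (hγ' : ∀ J, γ' J ∈ ⋀[R]^(p - r) M) (hγ'' : ∀ J, γ'' J ∈ ⋀[R]^(p - r) M)
    (hrep' : a ^ n • η = ∑ J ∈ Finset.univ.powersetCard r, wedgeProd R ω J * γ' J)
    (hrep'' : a ^ n • η = ∑ J ∈ Finset.univ.powersetCard r, wedgeProd R ω J * γ'' J) :
    ∀ J ∈ Finset.univ.powersetCard r,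
      ∀ α : Fin (p - r) → Module.Dual R M,
        (∀ i j, α i (ω j) = 0) →
        evalForm (p - r) α (γ' J) = evalForm (p - r) α (γ'' J) := by

  classical
  intro J₀ hJ₀ α hα
  obtain ⟨hsub0, hcard0⟩ := Finset.mem_powersetCard.mp hJ₀
  have hwp : ∀ s : Finset (Fin k),
      wedgeProd R ω s = (((s.sort (· ≤ ·)).map ω).map (ι R)).prod := by
    intro s; rw [wedgeProd, List.map_map]; rfl
  have hgmem : γ' J₀ - γ'' J₀ ∈ ⋀[R]^(p - r) M :=
    Submodule.sub_mem _ (hγ' J₀) (hγ'' J₀)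
  have hsum0 : ∑ J ∈ Finset.univ.powersetCard r,
      wedgeProd R ω J * (γ' J - γ'' J) = 0 := by
    have h := sub_eq_zero_of_eq (hrep'.symm.trans hrep'')
    rw [← Finset.sum_sub_distrib] at h
    rw [← h]
    exact Finset.sum_congr rfl fun J _ => mul_sub _ _ _
  have hmul : ∑ J ∈ Finset.univ.powersetCard r,
      wedgeProd R ω (Finset.univ \ J₀) * (wedgeProd R ω J * (γ' J - γ'' J)) = 0 := by
    rw [← Finset.mul_sum, hsum0, mul_zero]
  have hcollapse : wedgeProd R ω (Finset.univ \ J₀) *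
      (wedgeProd R ω J₀ * (γ' J₀ - γ'' J₀)) = 0 := by
    rw [← hmul]
    symm
    apply Finset.sum_eq_single_of_mem J₀ hJ₀
    intro J hJ hne
    obtain ⟨hsub, hcard⟩ := Finset.mem_powersetCard.mp hJ
    have hns : ¬ J ⊆ J₀ := fun hss =>
      hne (Finset.eq_of_subset_of_card_le hss (by rw [hcard0, hcard]))
    obtain ⟨i, hiJ, hiJ₀⟩ := Finset.not_subset.mp hns
    have h0 : wedgeProd R ω (Finset.univ \ J₀) * wedgeProd R ω J = 0 := by
      rw [hwp, hwp, ← List.prod_append, ← List.map_append]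
      exact aux_prod_zero_of_mem (a := ω i)
        (List.mem_map_of_mem (f := ω) ((Finset.mem_sort _).mpr
          (Finset.mem_sdiff.mpr ⟨Finset.mem_univ i, hiJ₀⟩)))
        (List.mem_map_of_mem (f := ω) ((Finset.mem_sort _).mpr hiJ))
    rw [← mul_assoc, h0, zero_mul]
  have hperm : ((Finset.univ \ J₀).sort (· ≤ ·) ++ J₀.sort (· ≤ ·)).Perm
      ((Finset.univ : Finset (Fin k)).sort (· ≤ ·)) := by
    apply List.perm_of_nodup_nodup_toFinset_eq
    · exact List.Nodup.append (Finset.sort_nodup _ _) (Finset.sort_nodup _ _)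
        (fun x hx1 hx2 =>
          (Finset.mem_sdiff.mp ((Finset.mem_sort _).mp hx1)).2 ((Finset.mem_sort _).mp hx2))
    · exact Finset.sort_nodup _ _
    · rw [List.toFinset_append, Finset.sort_toFinset, Finset.sort_toFinset,
        Finset.sort_toFinset, Finset.sdiff_union_of_subset hsub0]
  have hprodeq : wedgeProd R ω (Finset.univ \ J₀) * wedgeProd R ω J₀ =
      wedgeProd R ω Finset.univ ∨
      wedgeProd R ω (Finset.univ \ J₀) * wedgeProd R ω J₀ =
      -wedgeProd R ω Finset.univ := by
    have h := aux_prod_perm (R := R) (hperm.map ω)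
    rw [List.map_append] at h
    rw [hwp, hwp, hwp (Finset.univ), ← List.prod_append, ← List.map_append]
    exact h
  have hΩg : wedgeProd R ω Finset.univ * (γ' J₀ - γ'' J₀) = 0 := by
    rcases hprodeq with h | h
    · rw [← h, mul_assoc]; exact hcollapse
    · have := hcollapse
      rw [← mul_assoc, h, neg_mul] at this
      exact neg_eq_zero.mp this
  -- contraction step
  have hl0 : ∀ i, ∀ v ∈ ((Finset.univ : Finset (Fin k)).sort (· ≤ ·)).map ω, α i v = 0 := by
    intro i v hv
    obtain ⟨j, _, rfl⟩ := List.mem_map.mp hv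
    exact hα i j
  have hcontr := aux_iContr_prod (p - r) α
    (((Finset.univ : Finset (Fin k)).sort (· ≤ ·)).map ω) hl0 (γ' J₀ - γ'' J₀)
  rw [← hwp, hΩg, map_zero] at hcontr
  set N := (((Finset.univ : Finset (Fin k)).sort (· ≤ ·)).map ω).length * (p - r) with hN
  have hc3 : wedgeProd R ω Finset.univ * iContr (p - r) α (γ' J₀ - γ'' J₀) = 0 := by
    have h1 : ((-1 : R) ^ N * (-1 : R) ^ N) •
        (wedgeProd R ω Finset.univ * iContr (p - r) α (γ' J₀ - γ'' J₀)) = 0 := by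
      rw [mul_smul, ← hcontr, smul_zero]
    rwa [← pow_add, Even.neg_one_pow ⟨N, rfl⟩, one_smul] at h1
  have hg0 : iContr (p - r) α (γ' J₀ - γ'' J₀) =
      algebraMap R _ (evalForm (p - r) α (γ' J₀ - γ'' J₀)) := aux_iContr_eq _ α hgmem
  have hsmul : evalForm (p - r) α (γ' J₀ - γ'' J₀) • wedgeProd R ω Finset.univ = 0 := by
    rw [Algebra.smul_def, Algebra.commutes, ← hg0, hc3]
  have hann : ∀ x ∈ coeffIdeal R (wedgeProd R ω Finset.univ),
      evalForm (p - r) α (γ' J₀ - γ'' J₀) * x = 0 := by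
    intro x hx
    rw [coeffIdeal] at hx
    induction hx using Submodule.span_induction with
    | mem y hy =>
      obtain ⟨φ, rfl⟩ := hy
      have := congrArg φ hsmul
      rw [map_smul, smul_eq_mul, map_zero] at this
      exact this
    | zero => rw [mul_zero]
    | add y z _ _ ihy ihz => rw [mul_add, ihy, ihz, add_zero]
    | smul c y _ ihy =>
      rw [smul_eq_mul, ← mul_assoc, mul_comm _ c, mul_assoc, ihy, mul_zero]
  obtain ⟨c, hc, hcn⟩ := hnzd
  have hs0 : evalForm (p - r) α (γ' J₀ - γ'' J₀) = 0 :=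
    (mem_nonZeroDivisors_iff.mp hcn).2 _ (hann c hc)
  rw [map_sub] at hs0
  exact sub_eq_zero.mp hs0
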